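/- arXiv:2104.04902 — 7 statements merged into one kernel-verified Lean document; each statement's English description precedes it below -/
import Mathlib

section
/- Let $M, d$ be positive integers, $w \in \mathbb{R}^d$, and $o, q \in \{0,1,\dots,M\}^d$. Define the unary encoding $v(x) \in \{0,1\}^{Md}$ by concatenating, for each coordinate $i$, the vector of $x_i$ ones followed by $M - x_i$ zeros. Define the expanded weight vector $I(w) \in \mathbb{R}^{Md}$ by repeating each $w_i$ exactly $M$ times. Then $\sum_{i=1}^d w_i |o_i - q_i| = \sum_{k=1}^{Md} I(w)_k |v(o)_k - v(q)_k|$. -/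
/-- The unary encoding bit: `u x j = 1` if the (1-based) position `j+1 ≤ x`, else `0`. -/
noncomputable def unaryBit (M : ℕ) (x : ℕ) (j : Fin M) : ℝ :=
  if (j : ℕ) < x then 1 else 0

lemma unary_sum (M a : ℕ) (ha : a ≤ M) :
    ∑ j : Fin M, unaryBit M a j = (a : ℝ) := by
  unfold unaryBit
  rw [Finset.sum_boole]
  congr 1
  have : (Finset.univ.filter (fun x : Fin M => (x : ℕ) < a)).card =
      (Finset.range a).card := by
    refine Finset.card_bij (fun x _ => (x : ℕ)) ?_ ?_ ?_
    · intro x hx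
      simp only [Finset.mem_filter, Finset.mem_univ, true_and] at hx
      simpa using hx
    · intro x _ y _ h
      exact Fin.ext h
    · intro b hb
      simp only [Finset.mem_range] at hb
      exact ⟨⟨b, lt_of_lt_of_le hb ha⟩, by simp [hb], rfl⟩
  rw [this, Finset.card_range]

lemma unary_abs_sum (M a b : ℕ) (ha : a ≤ M) (hb : b ≤ M) :
    ∑ j : Fin M, |unaryBit M a j - unaryBit M b j| = |(a : ℝ) - b| := by
  wlog hab : b ≤ a generalizing a b
  · rw [abs_sub_comm (a : ℝ), ← this b a hb ha (le_of_not_ge hab)]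
    exact Finset.sum_congr rfl fun j _ => abs_sub_comm _ _
  have key : ∀ j : Fin M, |unaryBit M a j - unaryBit M b j| =
      unaryBit M a j - unaryBit M b j := by
    intro j
    apply abs_of_nonneg
    unfold unaryBit
    have : (j : ℕ) < b → (j : ℕ) < a := fun h => lt_of_lt_of_le h hab
    split_ifs with h1 h2 <;> simp_all <;> norm_num
  simp_rw [key]
  rw [Finset.sum_sub_distrib, unary_sum M a ha, unary_sum M b hb,
    abs_of_nonneg (by have := Nat.cast_le (α := ℝ).mpr hab; linarith)]

theorem stmt_2 (M d : ℕ) (hM : 0 < M) (hd : 0 < d) (w : Fin d → ℝ) (o q : Fin d → ℕ)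
    (ho : ∀ i, o i ≤ M) (hq : ∀ i, q i ≤ M) :
    ∑ i, w i * |(o i : ℝ) - (q i : ℝ)| =
      ∑ i : Fin d, ∑ j : Fin M, w i * |unaryBit M (o i) j - unaryBit M (q i) j| := by
  refine Finset.sum_congr rfl fun i _ => ?_
  rw [← Finset.mul_sum, unary_abs_sum M (o i) (q i) (ho i) (hq i)]
end

section
/- Let $M, d$ be positive integers, $w \in \mathbb{R}^d$, and $o, q \in \{0,1,\dots,M\}^d$. Define $P(o) \in \mathbb{R}^{2Md}$ as the concatenation over coordinates $i$ and positions $j \in \{1,\dots,M\}$ of the values $\cos(\frac{\pi}{2} u(o_i)_j)$, followed by the values $\sin(\frac{\pi}{2} u(o_i)_j)$, where $u(x)_j = 1$ if $j \le x$ and $0$ otherwise. Define $Q_w(q) \in \mathbb{R}^{2Md}$ analogously with entries $w_i \cos(\frac{\pi}{2} u(q_i)_j)$ and $w_i \sin(\frac{\pi}{2} u(q_i)_j)$. Then $\sum_{i=1}^d w_i |o_i - q_i| = M \sum_{i=1}^d w_i - \langle P(o), Q_w(q) \rangle$. -/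
open Real

lemma count_lt' (M a : ℕ) (ha : a ≤ M) :
    ∑ j : Fin M, unaryBit M a j = a := by
  simp only [unaryBit]
  rw [Fin.sum_univ_eq_sum_range (fun j => if j < a then (1:ℝ) else 0) M]
  rw [Finset.sum_ite, Finset.sum_const, Finset.sum_const]
  have : Finset.filter (fun j => j < a) (Finset.range M) = Finset.range a := by
    ext x; simp; omega
  simp [this]

lemma term_eq (M a b : ℕ) (hab : a ≤ b) (j : Fin M) :
    Real.cos (π / 2 * unaryBit M a j) * Real.cos (π / 2 * unaryBit M b j) +
      Real.sin (π / 2 * unaryBit M a j) * Real.sin (π / 2 * unaryBit M b j) =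
      1 - unaryBit M b j + unaryBit M a j := by
  unfold unaryBit
  by_cases h1 : (j : ℕ) < a
  · have h2 : (j : ℕ) < b := lt_of_lt_of_le h1 hab
    simp [h1, h2]
  · by_cases h2 : (j : ℕ) < b <;> simp [h1, h2]

lemma sum_eq (M a b : ℕ) (hab : a ≤ b) (hb : b ≤ M) :
    ∑ j : Fin M, (Real.cos (π / 2 * unaryBit M a j) * Real.cos (π / 2 * unaryBit M b j) +
      Real.sin (π / 2 * unaryBit M a j) * Real.sin (π / 2 * unaryBit M b j)) =
      (M : ℝ) - |(a : ℝ) - b| := by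
  have ha : a ≤ M := hab.trans hb
  rw [Finset.sum_congr rfl (fun j _ => term_eq M a b hab j)]
  rw [Finset.sum_add_distrib, Finset.sum_sub_distrib, Finset.sum_const,
    count_lt' M a ha, count_lt' M b hb]
  have : |(a : ℝ) - b| = (b : ℝ) - a := by
    rw [abs_sub_comm, abs_of_nonneg]
    have : (a:ℝ) ≤ b := Nat.cast_le.mpr hab; linarith
  rw [this]; simp; ring

lemma sum_eq' (M a b : ℕ) (ha : a ≤ M) (hb : b ≤ M) :
    ∑ j : Fin M, (Real.cos (π / 2 * unaryBit M a j) * Real.cos (π / 2 * unaryBit M b j) +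
      Real.sin (π / 2 * unaryBit M a j) * Real.sin (π / 2 * unaryBit M b j)) =
      (M : ℝ) - |(a : ℝ) - b| := by
  rcases le_total a b with h | h
  · exact sum_eq M a b h hb
  · rw [abs_sub_comm, ← sum_eq M b a h ha]
    apply Finset.sum_congr rfl
    intro j _; ring

theorem stmt_3 (M d : ℕ) (hM : 0 < M) (hd : 0 < d) (w : Fin d → ℝ) (o q : Fin d → ℕ)
    (ho : ∀ i, o i ≤ M) (hq : ∀ i, q i ≤ M) :
    ∑ i, w i * |(o i : ℝ) - (q i : ℝ)| =
      (M : ℝ) * ∑ i, w i -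
        ((∑ i : Fin d, ∑ j : Fin M,
            Real.cos (π / 2 * unaryBit M (o i) j) * (w i * Real.cos (π / 2 * unaryBit M (q i) j))) +
          ∑ i : Fin d, ∑ j : Fin M,
            Real.sin (π / 2 * unaryBit M (o i) j) * (w i * Real.sin (π / 2 * unaryBit M (q i) j))) := by
  rw [← Finset.sum_add_distrib, Finset.mul_sum, ← Finset.sum_sub_distrib]
  apply Finset.sum_congr rfl
  intro i _
  have key := sum_eq' M (o i) (q i) (ho i) (hq i)
  have expand : (∑ j : Fin M,
        Real.cos (π / 2 * unaryBit M (o i) j) * (w i * Real.cos (π / 2 * unaryBit M (q i) j))) +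
      ∑ j : Fin M,
        Real.sin (π / 2 * unaryBit M (o i) j) * (w i * Real.sin (π / 2 * unaryBit M (q i) j)) =
      w i * ∑ j : Fin M, (Real.cos (π / 2 * unaryBit M (o i) j) * Real.cos (π / 2 * unaryBit M (q i) j) +
        Real.sin (π / 2 * unaryBit M (o i) j) * Real.sin (π / 2 * unaryBit M (q i) j)) := by
    rw [Finset.mul_sum, ← Finset.sum_add_distrib]
    apply Finset.sum_congr rfl; intro j _; ring
  rw [expand, key]; ring
end

section
/- Let $M, d$ be positive integers, $w \in \mathbb{R}^d$, and $o, q \in \{0,1,\dots,M\}^d$. With $P$ and $Q_w$ the preprocessing and query transformations into $\mathbb{R}^{2Md}$, the Euclidean distance satisfies $\|P(o) - Q_w(q)\|_2^2 = M\left(d + \sum_{i=1}^d w_i^2\right) - 2\left(M\sum_{i=1}^d w_i - d_w^{l_1}(o,q)\right)$, where $d_w^{l_1}(o,q) = \sum_{i=1}^d w_i|o_i - q_i|$. -/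
open Real

lemma unaryBit_zero_or_one (M x : ℕ) (j : Fin M) : unaryBit M x j = 0 ∨ unaryBit M x j = 1 := by
  unfold unaryBit; split <;> simp

lemma pointwise (a b w : ℝ) (ha : a = 0 ∨ a = 1) (hb : b = 0 ∨ b = 1) :
    (Real.cos (π / 2 * a) - w * Real.cos (π / 2 * b)) ^ 2 +
      (Real.sin (π / 2 * a) - w * Real.sin (π / 2 * b)) ^ 2
      = 1 + w ^ 2 - 2 * w + 2 * w * |a - b| := by
  rcases ha with rfl | rfl <;> rcases hb with rfl | rfl <;>
    simp [Real.cos_pi_div_two, Real.sin_pi_div_two, abs_of_nonneg, abs_of_nonpos] <;> ring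

lemma sum_absdiff_le (M a b : ℕ) (hab : a ≤ b) (hb : b ≤ M) :
    ∑ j : Fin M, |unaryBit M a j - unaryBit M b j| = (b : ℝ) - (a : ℝ) := by
  have key : ∀ j : Fin M, |unaryBit M a j - unaryBit M b j|
      = unaryBit M b j - unaryBit M a j := by
    intro j
    unfold unaryBit
    by_cases h1 : (j : ℕ) < a
    · have h2 : (j : ℕ) < b := lt_of_lt_of_le h1 hab
      simp [h1, h2]
    · by_cases h2 : (j : ℕ) < b <;> simp [h1, h2]
  simp only [key, Finset.sum_sub_distrib]
  have hsum : ∀ x : ℕ, x ≤ M → ∑ j : Fin M, unaryBit M x j = (x : ℝ) := by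
    intro x hx
    unfold unaryBit
    rw [Fin.sum_univ_eq_sum_range (fun j => if j < x then (1:ℝ) else 0) M, Finset.sum_boole]
    have : (Finset.range M).filter (· < x) = Finset.range x := by
      ext j; simp; omega
    simp [this]
  rw [hsum b hb, hsum a (le_trans hab hb)]

theorem stmt_6 (M d : ℕ) (hM : 0 < M) (hd : 0 < d) (w : Fin d → ℝ) (o q : Fin d → ℕ)
    (ho : ∀ i, o i ≤ M) (hq : ∀ i, q i ≤ M) :
    (∑ i : Fin d, ∑ j : Fin M,
        (Real.cos (π / 2 * unaryBit M (o i) j) - w i * Real.cos (π / 2 * unaryBit M (q i) j)) ^ 2) +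
      (∑ i : Fin d, ∑ j : Fin M,
        (Real.sin (π / 2 * unaryBit M (o i) j) - w i * Real.sin (π / 2 * unaryBit M (q i) j)) ^ 2) =
      (M : ℝ) * ((d : ℝ) + ∑ i, w i ^ 2) -
        2 * ((M : ℝ) * ∑ i, w i - ∑ i, w i * |(o i : ℝ) - (q i : ℝ)|) := by
  have sum_absdiff : ∀ a b : ℕ, a ≤ M → b ≤ M →
      ∑ j : Fin M, |unaryBit M a j - unaryBit M b j| = |(a : ℝ) - (b : ℝ)| := by
    intro a b ha hb
    rcases le_total a b with h | h
    · rw [sum_absdiff_le M a b h hb, abs_of_nonpos (by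
        simp only [sub_nonpos]; exact_mod_cast h)]
      ring
    · rw [show (∑ j : Fin M, |unaryBit M a j - unaryBit M b j|)
          = ∑ j : Fin M, |unaryBit M b j - unaryBit M a j| from
          Finset.sum_congr rfl fun j _ => abs_sub_comm _ _,
        sum_absdiff_le M b a h ha, abs_of_nonneg (by
        simp only [sub_nonneg]; exact_mod_cast h)]
  rw [← Finset.sum_add_distrib]
  have key : ∀ i : Fin d,
      ((∑ j : Fin M,
        (Real.cos (π / 2 * unaryBit M (o i) j) - w i * Real.cos (π / 2 * unaryBit M (q i) j)) ^ 2) +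
      ∑ j : Fin M,
        (Real.sin (π / 2 * unaryBit M (o i) j) - w i * Real.sin (π / 2 * unaryBit M (q i) j)) ^ 2)
      = (M : ℝ) * (1 + w i ^ 2 - 2 * w i) + 2 * w i * |(o i : ℝ) - (q i : ℝ)| := by
    intro i
    rw [← Finset.sum_add_distrib]
    have hpt : ∀ j : Fin M,
        (Real.cos (π / 2 * unaryBit M (o i) j) - w i * Real.cos (π / 2 * unaryBit M (q i) j)) ^ 2 +
        (Real.sin (π / 2 * unaryBit M (o i) j) - w i * Real.sin (π / 2 * unaryBit M (q i) j)) ^ 2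
        = 1 + w i ^ 2 - 2 * w i + 2 * w i * |unaryBit M (o i) j - unaryBit M (q i) j| :=
      fun j => pointwise _ _ _ (unaryBit_zero_or_one M (o i) j) (unaryBit_zero_or_one M (q i) j)
    rw [Finset.sum_congr rfl fun j _ => hpt j, Finset.sum_add_distrib, Finset.sum_const,
      ← Finset.mul_sum, sum_absdiff (o i) (q i) (ho i) (hq i)]
    simp [Finset.card_univ]
  rw [Finset.sum_congr rfl fun i _ => key i]
  simp only [mul_add, mul_sub, mul_one, Finset.sum_add_distrib, Finset.sum_sub_distrib,
    Finset.sum_const, Finset.card_univ, Fintype.card_fin, nsmul_eq_mul, ← Finset.mul_sum]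
  have h2 : ∑ x : Fin d, 2 * w x * |(o x : ℝ) - (q x : ℝ)|
      = (∑ i : Fin d, w i * |(o i : ℝ) - (q i : ℝ)|) * 2 := by
    rw [Finset.sum_mul]
    exact Finset.sum_congr rfl fun i _ => by ring
  rw [h2]
  ring
end

section
/- Let $M, d$ be positive integers, $w \in \mathbb{R}^d$ with $w \ne 0$, and $o, q \in \{0,1,\dots,M\}^d$. With $P$ and $Q_w$ the preprocessing and query transformations, the cosine similarity satisfies $\frac{\langle P(o), Q_w(q)\rangle}{\|P(o)\|_2 \|Q_w(q)\|_2} = \frac{M\sum_{i=1}^d w_i - d_w^{l_1}(o,q)}{M\sqrt{d\sum_{i=1}^d w_i^2}}$. -/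
open Real

lemma cos_unary (M x : ℕ) (j : Fin M) :
    Real.cos (π / 2 * unaryBit M x j) = if (j : ℕ) < x then 0 else 1 := by
  unfold unaryBit; split_ifs <;> simp [Real.cos_pi_div_two]

lemma sin_unary (M x : ℕ) (j : Fin M) :
    Real.sin (π / 2 * unaryBit M x j) = if (j : ℕ) < x then 1 else 0 := by
  unfold unaryBit; split_ifs <;> simp

lemma count_lemma (M a b : ℕ) (hb : b ≤ M) :
    (∑ j : Fin M, (if a ≤ (j:ℕ) ∧ (j:ℕ) < b then (1:ℝ) else 0)) = ((b - a : ℕ) : ℝ) := by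
  rw [Fin.sum_univ_eq_sum_range (fun j => if a ≤ j ∧ j < b then (1:ℝ) else 0)]
  rw [Finset.sum_boole]
  congr 1
  rw [show (Finset.range M).filter (fun j => a ≤ j ∧ j < b) = Finset.Ico a b by
    ext n; simp [Finset.mem_Ico, Finset.mem_range]; omega]
  simp [Nat.card_Ico]

lemma inner_j (M x y : ℕ) (hx : x ≤ M) (hy : y ≤ M) :
    (∑ j : Fin M, ((if (j:ℕ) < x then (0:ℝ) else 1) * (if (j:ℕ) < y then 0 else 1)
      + (if (j:ℕ) < x then (1:ℝ) else 0) * (if (j:ℕ) < y then 1 else 0)))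
    = M - |(x:ℝ) - y| := by
  have h1 : ∀ j : Fin M, ((if (j:ℕ) < x then (0:ℝ) else 1) * (if (j:ℕ) < y then 0 else 1)
      + (if (j:ℕ) < x then (1:ℝ) else 0) * (if (j:ℕ) < y then 1 else 0))
      = 1 - (if min x y ≤ (j:ℕ) ∧ (j:ℕ) < max x y then (1:ℝ) else 0) := by
    intro j; split_ifs <;> norm_num <;> omega
  rw [Finset.sum_congr rfl (fun j _ => h1 j), Finset.sum_sub_distrib,
    count_lemma M (min x y) (max x y) (by omega)]
  have : |(x:ℝ) - y| = ((max x y - min x y : ℕ) : ℝ) := by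
    rcases le_total x y with h | h
    · have hc : (x:ℝ) ≤ y := Nat.cast_le.mpr h
      rw [abs_of_nonpos (by linarith), max_eq_right h, min_eq_left h, Nat.cast_sub h]; ring
    · have hc : (y:ℝ) ≤ x := Nat.cast_le.mpr h
      rw [abs_of_nonneg (by linarith), max_eq_left h, min_eq_right h, Nat.cast_sub h]
  simp [this]

theorem stmt_7 (M d : ℕ) (hM : 0 < M) (hd : 0 < d) (w : Fin d → ℝ) (hw : w ≠ 0)
    (o q : Fin d → ℕ) (ho : ∀ i, o i ≤ M) (hq : ∀ i, q i ≤ M) :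
    ((∑ i : Fin d, ∑ j : Fin M,
          Real.cos (π / 2 * unaryBit M (o i) j) * (w i * Real.cos (π / 2 * unaryBit M (q i) j))) +
        ∑ i : Fin d, ∑ j : Fin M,
          Real.sin (π / 2 * unaryBit M (o i) j) * (w i * Real.sin (π / 2 * unaryBit M (q i) j))) /
      (Real.sqrt ((∑ i : Fin d, ∑ j : Fin M, Real.cos (π / 2 * unaryBit M (o i) j) ^ 2) +
          ∑ i : Fin d, ∑ j : Fin M, Real.sin (π / 2 * unaryBit M (o i) j) ^ 2) *
        Real.sqrt ((∑ i : Fin d, ∑ j : Fin M, (w i * Real.cos (π / 2 * unaryBit M (q i) j)) ^ 2) +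
          ∑ i : Fin d, ∑ j : Fin M, (w i * Real.sin (π / 2 * unaryBit M (q i) j)) ^ 2)) =
      ((M : ℝ) * ∑ i, w i - ∑ i, w i * |(o i : ℝ) - (q i : ℝ)|) /
        ((M : ℝ) * Real.sqrt ((d : ℝ) * ∑ i, w i ^ 2)) := by
  simp only [cos_unary, sin_unary]
  have hnum : ((∑ i : Fin d, ∑ j : Fin M,
        (if (j:ℕ) < o i then (0:ℝ) else 1) * (w i * (if (j:ℕ) < q i then 0 else 1))) +
      ∑ i : Fin d, ∑ j : Fin M,
        (if (j:ℕ) < o i then (1:ℝ) else 0) * (w i * (if (j:ℕ) < q i then 1 else 0)))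
      = (M : ℝ) * ∑ i, w i - ∑ i, w i * |(o i : ℝ) - (q i : ℝ)| := by
    rw [← Finset.sum_add_distrib]
    have hi : ∀ i : Fin d, ((∑ j : Fin M,
          (if (j:ℕ) < o i then (0:ℝ) else 1) * (w i * (if (j:ℕ) < q i then 0 else 1))) +
        ∑ j : Fin M,
          (if (j:ℕ) < o i then (1:ℝ) else 0) * (w i * (if (j:ℕ) < q i then 1 else 0)))
        = w i * ((M:ℝ) - |(o i : ℝ) - (q i : ℝ)|) := by
      intro i
      rw [← Finset.sum_add_distrib, ← inner_j M (o i) (q i) (ho i) (hq i), Finset.mul_sum]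
      exact Finset.sum_congr rfl (fun j _ => by ring)
    rw [Finset.sum_congr rfl (fun i _ => hi i)]
    rw [Finset.sum_congr rfl (fun i _ => mul_sub (w i) _ _), Finset.sum_sub_distrib]
    congr 1
    rw [Finset.mul_sum]
    exact Finset.sum_congr rfl fun i _ => mul_comm _ _
  have hD1 : ((∑ i : Fin d, ∑ j : Fin M, (if (j:ℕ) < o i then (0:ℝ) else 1) ^ 2) +
      ∑ i : Fin d, ∑ j : Fin M, (if (j:ℕ) < o i then (1:ℝ) else 0) ^ 2) = (d : ℝ) * M := by
    rw [← Finset.sum_add_distrib]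
    have hi : ∀ i : Fin d, ((∑ j : Fin M, (if (j:ℕ) < o i then (0:ℝ) else 1) ^ 2) +
        ∑ j : Fin M, (if (j:ℕ) < o i then (1:ℝ) else 0) ^ 2) = (M : ℝ) := by
      intro i
      rw [← Finset.sum_add_distrib]
      rw [Finset.sum_congr rfl (fun j _ => show _ = (1:ℝ) by split_ifs <;> norm_num)]
      simp
    rw [Finset.sum_congr rfl (fun i _ => hi i)]
    simp [mul_comm]
  have hD2 : ((∑ i : Fin d, ∑ j : Fin M, (w i * (if (j:ℕ) < q i then (0:ℝ) else 1)) ^ 2) +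
      ∑ i : Fin d, ∑ j : Fin M, (w i * (if (j:ℕ) < q i then (1:ℝ) else 0)) ^ 2)
      = (M : ℝ) * ∑ i, w i ^ 2 := by
    rw [← Finset.sum_add_distrib]
    have hi : ∀ i : Fin d, ((∑ j : Fin M, (w i * (if (j:ℕ) < q i then (0:ℝ) else 1)) ^ 2) +
        ∑ j : Fin M, (w i * (if (j:ℕ) < q i then (1:ℝ) else 0)) ^ 2) = (M : ℝ) * w i ^ 2 := by
      intro i
      rw [← Finset.sum_add_distrib]
      rw [Finset.sum_congr rfl (fun j _ => show _ = w i ^ 2 by split_ifs <;> ring)]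
      simp [mul_comm]
    rw [Finset.sum_congr rfl (fun i _ => hi i), ← Finset.mul_sum]
  rw [hnum, hD1, hD2]
  have hsq : Real.sqrt ((d:ℝ) * M) * Real.sqrt ((M:ℝ) * ∑ i, w i ^ 2)
      = (M : ℝ) * Real.sqrt ((d:ℝ) * ∑ i, w i ^ 2) := by
    rw [← Real.sqrt_mul (by positivity)]
    rw [show (d:ℝ) * M * ((M:ℝ) * ∑ i, w i ^ 2) = (M:ℝ)^2 * ((d:ℝ) * ∑ i, w i ^ 2) by ring]
    rw [Real.sqrt_mul (sq_nonneg _), Real.sqrt_sq (by positivity)]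
  rw [hsq]
end

section
/- With $o^i = (i(R_1 - R_2), 0, 0)$, $q^j = (0, j(R_1 - R_2), R_1)$ and $w$ as defined ($w = (1,-1,-1)$ if $R_1 < 0$, $w = (1,-1,1)$ if $R_1 \ge 0$), for $R_1 < R_2$ and all positive integers $i, j$: if $i \le j$ then $d_w^{l_1}(o^i, q^j) \le R_1$, and if $i > j$ then $d_w^{l_1}(o^i, q^j) \ge R_2$. -/
theorem stmt_11 (R₁ R₂ : ℝ) (h : R₁ < R₂) (i j : ℕ) (hi : 1 ≤ i) (hj : 1 ≤ j) :
    (i ≤ j →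
      (1 : ℝ) * |(i : ℝ) * (R₁ - R₂) - 0| +
        (-1 : ℝ) * |(0 : ℝ) - (j : ℝ) * (R₁ - R₂)| +
        (if R₁ < 0 then (-1 : ℝ) else 1) * |(0 : ℝ) - R₁| ≤ R₁) ∧
    (j < i →
      R₂ ≤ (1 : ℝ) * |(i : ℝ) * (R₁ - R₂) - 0| +
        (-1 : ℝ) * |(0 : ℝ) - (j : ℝ) * (R₁ - R₂)| +
        (if R₁ < 0 then (-1 : ℝ) else 1) * |(0 : ℝ) - R₁|) := by
  have hi' : (1:ℝ) ≤ (i:ℝ) := by exact_mod_cast hi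
  have hj' : (1:ℝ) ≤ (j:ℝ) := by exact_mod_cast hj
  have h1 : |(i : ℝ) * (R₁ - R₂) - 0| = (i:ℝ) * (R₂ - R₁) := by
    rw [sub_zero, abs_of_nonpos (by nlinarith)]; ring
  have h2 : |(0 : ℝ) - (j : ℝ) * (R₁ - R₂)| = (j:ℝ) * (R₂ - R₁) := by
    rw [abs_of_nonneg (by nlinarith)]; ring
  have h3 : (if R₁ < 0 then (-1 : ℝ) else 1) * |(0 : ℝ) - R₁| = R₁ := by
    rw [zero_sub, abs_neg]
    rcases lt_or_ge R₁ 0 with hR | hR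
    · rw [if_pos hR, abs_of_neg hR]; ring
    · rw [if_neg (not_lt.mpr hR), abs_of_nonneg hR]; ring
  rw [h1, h2, h3]
  constructor
  · intro hij
    have : (i:ℝ) ≤ (j:ℝ) := by exact_mod_cast hij
    nlinarith
  · intro hij
    have : (j:ℝ) + 1 ≤ (i:ℝ) := by exact_mod_cast hij
    nlinarith
end

section
/- Let $S \subset \mathbb{R}^d$ contain at least two distinct points. Then for any reals $R_1 < R_2$ there is no function $p : S \times S \to [0,1]$ and no thresholds $P_1 > P_2$ such that for all $o, q \in S$ and all $w \in \mathbb{R}^d$: $d_w^{l_1}(o,q) \le R_1$ implies $p(o,q) \ge P_1$, and $d_w^{l_1}(o,q) \ge R_2$ implies $p(o,q) \le P_2$. Concretely: for any two distinct points $o \ne q$ in $S$, there exist weight vectors $w, w' \in \mathbb{R}^d$ with $d_w^{l_1}(o,q) = R_1$ and $d_{w'}^{l_1}(o,q) = R_2$. -/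
theorem stmt_12 (d : ℕ) (S : Set (Fin d → ℝ)) (o q : Fin d → ℝ)
    (hoS : o ∈ S) (hqS : q ∈ S) (hne : o ≠ q) (R₁ R₂ : ℝ) (h12 : R₁ < R₂) :
    (¬ ∃ (p : (Fin d → ℝ) → (Fin d → ℝ) → ℝ) (P₁ P₂ : ℝ),
        P₂ < P₁ ∧ (∀ o' ∈ S, ∀ q' ∈ S, p o' q' ∈ Set.Icc (0 : ℝ) 1) ∧
        (∀ o' ∈ S, ∀ q' ∈ S, ∀ w : Fin d → ℝ,
          (∑ i, w i * |o' i - q' i|) ≤ R₁ → P₁ ≤ p o' q') ∧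
        (∀ o' ∈ S, ∀ q' ∈ S, ∀ w : Fin d → ℝ,
          R₂ ≤ (∑ i, w i * |o' i - q' i|) → p o' q' ≤ P₂)) ∧
    (∃ w w' : Fin d → ℝ,
      (∑ i, w i * |o i - q i|) = R₁ ∧ (∑ i, w' i * |o i - q i|) = R₂) := by
  obtain ⟨i₀, hi₀⟩ : ∃ i, o i ≠ q i := by
    by_contra h
    push_neg at h
    exact hne (funext h)
  have habs : |o i₀ - q i₀| ≠ 0 := by
    simp [sub_eq_zero, hi₀]
  have key : ∀ R : ℝ, ∃ w : Fin d → ℝ, (∑ i, w i * |o i - q i|) = R := by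
    intro R
    refine ⟨fun i => if i = i₀ then R / |o i₀ - q i₀| else 0, ?_⟩
    rw [Finset.sum_eq_single i₀]
    · simp [div_mul_cancel₀ _ habs]
    · intro b _ hb; simp [hb]
    · simp
  refine ⟨?_, ?_⟩
  · rintro ⟨p, P₁, P₂, hP, _, h1, h2⟩
    obtain ⟨w, hw⟩ := key R₁
    obtain ⟨w', hw'⟩ := key R₂
    have := h1 o hoS q hqS w hw.le
    have := h2 o hoS q hqS w' hw'.ge
    linarith
  · obtain ⟨w, hw⟩ := key R₁
    obtain ⟨w', hw'⟩ := key R₂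
    exact ⟨w, w', hw, hw'⟩
end

section
/- Let $M, d$ be positive integers, $q \in \{0,1,\dots,M\}^d$, $w \in \mathbb{R}^d$, and $a \in \mathbb{R}^{2Md}$ written in blocks as before, with suffix sums $s_i(k) = \sum_{j=k}^M a_{ij}$ (and $s_i(M+1)=0$) and prefix sums $t_i(k) = \sum_{j=1}^{k-1} a_{(d+i)j}$ (and $t_i(1)=0$). Then $\langle a, Q_w(q) \rangle = \sum_{i=1}^d w_i \left( s_i(q_i + 1) + t_i(q_i + 1) \right)$, where $Q_w(q)$ is the query transformation. -/
open Real

/-- Suffix sum `s_i(k) = ∑_{j=k}^M a_{ij}` of the `i`-th cosine block (1-based positions). -/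
def suffixSum (M : ℕ) (a : Fin M → ℝ) (k : ℕ) : ℝ :=
  ∑ j : Fin M, if k ≤ (j : ℕ) + 1 then a j else 0

/-- Prefix sum `t_i(k) = ∑_{j=1}^{k-1} a_{(d+i)j}` of the `i`-th sine block (1-based positions). -/
def prefixSum (M : ℕ) (a : Fin M → ℝ) (k : ℕ) : ℝ :=
  ∑ j : Fin M, if (j : ℕ) + 1 < k then a j else 0

theorem stmt_17 (M d : ℕ) (hM : 0 < M) (hd : 0 < d) (q : Fin d → ℕ) (hq : ∀ i, q i ≤ M)
    (w : Fin d → ℝ) (a₁ a₂ : Fin d → Fin M → ℝ) :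
    (∑ i : Fin d, ∑ j : Fin M, a₁ i j * (w i * Real.cos (π / 2 * unaryBit M (q i) j))) +
      (∑ i : Fin d, ∑ j : Fin M, a₂ i j * (w i * Real.sin (π / 2 * unaryBit M (q i) j))) =
      ∑ i : Fin d, w i * (suffixSum M (a₁ i) (q i + 1) + prefixSum M (a₂ i) (q i + 1)) := by
  rw [← Finset.sum_add_distrib]
  refine Finset.sum_congr rfl fun i _ => ?_
  rw [suffixSum, prefixSum, mul_add, Finset.mul_sum, Finset.mul_sum, ← Finset.sum_add_distrib,
    ← Finset.sum_add_distrib]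
  refine Finset.sum_congr rfl fun j _ => ?_
  unfold unaryBit
  by_cases h : (j : ℕ) < q i
  · simp [h, Nat.succ_lt_succ h, not_le.mpr h, Real.cos_pi_div_two, Real.sin_pi_div_two]
    ring
  · have h2 : q i ≤ (j : ℕ) := not_lt.1 h
    simp [h, Nat.succ_le_succ h2, fun hh : (j:ℕ)+1 < q i + 1 => h (Nat.lt_of_succ_lt_succ hh)]
    ring
end
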